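/- For the i.i.d. word X with parameter p ∈ (0,1/2), let I_1 be the smallest i ∈ ℕ for which X(1,i) contains an order, and inductively let I_m be the smallest i ≥ I_{m-1}+1 for which X(I_{m-1}+1, i) contains an order. Call i ∈ ℕ ancestor-free if X(k,i) contains an order for every k ∈ {1,...,i}. Then I_m is exactly the m-th smallest ancestor-free time in ℕ. -/

import Mathlib

/-- The five symbols of Sheffield's inventory accumulation model: hamburger `hb`,
cheeseburger `cb`, hamburger order `ho`, cheeseburger order `co`, flexible order `fo`. -/
inductive BSym : Type
  | hb | cb | ho | co | fo
  deriving DecidableEq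

instance : MeasurableSpace BSym := ⊤

/-- Remove the rightmost element satisfying `P` from a list (if any). -/
def removeRightmost (P : BSym → Bool) : List BSym → Option (List BSym)
  | [] => none
  | a :: l =>
    match removeRightmost P l with
    | some l' => some (a :: l')
    | none => if P a then some l else none

/-- One step of the word reduction: the state is the pair (orders, burgers) of the
reduced word so far (all burgers to the right of all orders).  A burger is appended
to the burger stack; an order consumes the freshest matching burger (flexible orders
consume the freshest burger of either type), or is appended to the order list if no
matching burger is present.  This implements the relations
`Cc = Hh = CF = HF = ∅`, `Ch = hC`, `Hc = cH`. -/
def burgerStep : List BSym × List BSym → BSym → List BSym × List BSym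
  | (O, B), BSym.hb => (O, B ++ [BSym.hb])
  | (O, B), BSym.cb => (O, B ++ [BSym.cb])
  | (O, B), BSym.ho =>
    match removeRightmost (· == BSym.hb) B with
    | some B' => (O, B')
    | none => (O ++ [BSym.ho], B)
  | (O, B), BSym.co =>
    match removeRightmost (· == BSym.cb) B with
    | some B' => (O, B')
    | none => (O ++ [BSym.co], B)
  | (O, B), BSym.fo =>
    match removeRightmost (fun _ => true) B with
    | some B' => (O, B')
    | none => (O ++ [BSym.fo], B)

/-- The reduced form `R(w)` of a word, as a pair (orders, burgers). -/
def reduceWord (w : List BSym) : List BSym × List BSym := w.foldl burgerStep ([], [])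

/-- The length `|R(w)|` of the reduced word. -/
def reducedLength (w : List BSym) : ℕ :=
  (reduceWord w).1.length + (reduceWord w).2.length

/-- The subword `X_a ⋯ X_b` of a bi-infinite word (empty if `a > b`). -/
def seg (x : ℤ → BSym) (a b : ℤ) : List BSym :=
  (List.range (b + 1 - a).toNat).map (fun k => x (a + k))

/-- A time `i ≥ 1` is ancestor-free for the word `X` if the reduced word `X(k,i)`
contains an order for every `k ∈ {1,…,i}`. -/
def AncestorFree (X : ℤ → BSym) (i : ℕ) : Prop :=
  1 ≤ i ∧ ∀ k : ℕ, 1 ≤ k → k ≤ i → (reduceWord (seg X (k : ℤ) (i : ℤ))).1 ≠ []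

/-! ### Auxiliary lemmas -/

lemma rr_none_iff (P : BSym → Bool) (l : List BSym) :
    removeRightmost P l = none ↔ ∀ a ∈ l, ¬ P a := by
  induction l with
  | nil => simp [removeRightmost]
  | cons a l ih =>
    rw [removeRightmost]
    rcases h : removeRightmost P l with _ | l'
    · rw [h] at ih
      simp only [List.mem_cons]
      split_ifs with hPa
      · simp only [reduceCtorEq, false_iff]
        push_neg
        exact ⟨a, Or.inl rfl, hPa⟩
      · simp only [true_iff]
        rintro b (rfl | hb)
        · exact hPa
        · exact (ih.mp rfl) b hb
    · simp only [reduceCtorEq, false_iff]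
      push_neg
      have : ¬ (∀ a ∈ l, ¬ P a) := by
        intro hall
        rw [← ih] at hall
        rw [hall] at h
        exact absurd h (by simp)
      push_neg at this
      obtain ⟨b, hb, hPb⟩ := this
      exact ⟨b, List.mem_cons_of_mem _ hb, by simpa using hPb⟩

/-- If `B2 ⊆ B1` (as a sublist), `B2` has no `P`-element, and the rightmost `P`-element
of `B1` is removed, `B2` is still a sublist. -/
lemma sublist_rr_of_none {P : BSym → Bool} {B2 B1 B1' : List BSym}
    (hs : B2.Sublist B1) (hnone : ∀ a ∈ B2, ¬ P a)
    (h1 : removeRightmost P B1 = some B1') : B2.Sublist B1' := by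
  induction hs generalizing B1' with
  | slnil => simp [removeRightmost] at h1
  | @cons l₁ l₂ a hs ih =>
    rw [removeRightmost] at h1
    rcases h : removeRightmost P l₂ with _ | l' <;> rw [h] at h1
    · split_ifs at h1 with hPa
      · cases h1; exact hs
    · cases h1; exact (ih hnone h).cons a
  | @cons_cons l₁ l₂ a hs ih =>
    have hPa : ¬ P a := hnone a (by simp)
    rw [removeRightmost] at h1
    rcases h : removeRightmost P l₂ with _ | l' <;> rw [h] at h1
    · simp [hPa] at h1
    · cases h1
      exact (ih (fun b hb => hnone b (List.mem_cons_of_mem a hb)) h).cons_cons a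

/-- Removing the rightmost `P`-element preserves the sublist relation. -/
lemma sublist_rr {P : BSym → Bool} {B2 B1 B2' B1' : List BSym}
    (hs : B2.Sublist B1)
    (h2 : removeRightmost P B2 = some B2')
    (h1 : removeRightmost P B1 = some B1') : B2'.Sublist B1' := by
  induction hs generalizing B1' B2' with
  | slnil => simp [removeRightmost] at h1
  | @cons l₁ l₂ a hs ih =>
    rw [removeRightmost] at h1
    rcases h : removeRightmost P l₂ with _ | l' <;> rw [h] at h1
    · split_ifs at h1 with hPa
      cases h1
      have hno : ∀ b ∈ l₁, ¬ P b := fun b hb =>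
        (rr_none_iff P l₂).mp h b (hs.mem hb)
      rw [(rr_none_iff P l₁).mpr hno] at h2
      cases h2
    · cases h1
      exact (ih h2 h).cons a
  | @cons_cons l₁ l₂ a hs ih =>
    rw [removeRightmost] at h1 h2
    rcases hh2 : removeRightmost P l₁ with _ | l2' <;> rw [hh2] at h2
    · have hB2 : ∀ b ∈ l₁, ¬ P b := (rr_none_iff P l₁).mp hh2
      split_ifs at h2 with hPa
      cases h2
      rcases hh1 : removeRightmost P l₂ with _ | l1' <;> rw [hh1] at h1
      · simp only [hPa, if_true] at h1
        cases h1; exact hs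
      · cases h1
        exact (sublist_rr_of_none hs hB2 hh1).cons a
    · rcases hh1 : removeRightmost P l₂ with _ | l1' <;> rw [hh1] at h1
      · exfalso
        obtain ⟨b, hb, hPb⟩ : ∃ b ∈ l₁, P b := by
          by_contra hc
          push_neg at hc
          rw [(rr_none_iff P l₁).mpr (fun b hb => by simpa using hc b hb)] at hh2
          cases hh2
        exact ((rr_none_iff P l₂).mp hh1 b (hs.mem hb)) hPb
      · cases h1; cases h2
        exact (ih hh2 hh1).cons_cons a

lemma step_orders (s : List BSym × List BSym) (x : BSym) :
    ∃ t, (burgerStep s x).1 = s.1 ++ t := by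
  obtain ⟨O, B⟩ := s
  cases x <;> simp only [burgerStep]
  · exact ⟨[], by simp⟩
  · exact ⟨[], by simp⟩
  all_goals {
    rcases removeRightmost _ B with _ | B'
    · exact ⟨[_], rfl⟩
    · exact ⟨[], by simp⟩ }

lemma foldl_orders (v : List BSym) (s : List BSym × List BSym) :
    ∃ t, (List.foldl burgerStep s v).1 = s.1 ++ t := by
  induction v generalizing s with
  | nil => exact ⟨[], by simp⟩
  | cons x v ih =>
    obtain ⟨t1, ht1⟩ := step_orders s x
    obtain ⟨t2, ht2⟩ := ih (burgerStep s x)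
    exact ⟨t1 ++ t2, by simp [List.foldl_cons, ht2, ht1]⟩

lemma foldl_orders_empty {v : List BSym} {s : List BSym × List BSym}
    (h : (List.foldl burgerStep s v).1 = []) : s.1 = [] := by
  obtain ⟨t, ht⟩ := foldl_orders v s
  rw [ht, List.append_eq_nil_iff] at h
  exact h.1

/-- The key monotonicity invariant: starting from a smaller burger stack (and no
orders), as long as no unmatched orders appear on either side, the burger stack
stays a sublist. -/
lemma inv_sublist : ∀ (v : List BSym) (B1 B2 : List BSym), B2.Sublist B1 →
    (List.foldl burgerStep ([], B1) v).1 = [] →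
    (List.foldl burgerStep ([], B2) v).1 = [] →
    (List.foldl burgerStep ([], B2) v).2.Sublist (List.foldl burgerStep ([], B1) v).2 := by
  intro v
  induction v with
  | nil => intro B1 B2 hs _ _; simpa using hs
  | cons x v ih =>
    intro B1 B2 hs h1 h2
    cases x <;> simp only [List.foldl_cons, burgerStep] at h1 h2 ⊢
    · exact ih _ _ (hs.append (List.Sublist.refl _)) h1 h2
    · exact ih _ _ (hs.append (List.Sublist.refl _)) h1 h2
    all_goals {
      rcases hr1 : removeRightmost _ B1 with _ | B1' <;> simp only [hr1] at h1 ⊢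
      · exact absurd (foldl_orders_empty h1) (by simp)
      · rcases hr2 : removeRightmost _ B2 with _ | B2' <;> simp only [hr2] at h2 ⊢
        · exact absurd (foldl_orders_empty h2) (by simp)
        · exact ih _ _ (sublist_rr hs hr2 hr1) h1 h2 }

lemma seg_def' (x : ℤ → BSym) (a b : ℤ) :
    seg x a b = (List.range (b+1-a).toNat).map (fun k : ℕ => x (a + (k:ℤ))) := by
  simp only [seg, bind_pure_comp, List.map_eq_map, List.map_map]
  rfl

lemma seg_empty (x : ℤ → BSym) {a b : ℤ} (h : b < a) : seg x a b = [] := by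
  have h0 : (b + 1 - a).toNat = 0 := by omega
  rw [seg_def', h0]
  simp

lemma seg_single (x : ℤ → BSym) (a : ℤ) : seg x a a = [x a] := by
  have h1 : (a + 1 - a).toNat = 1 := by omega
  rw [seg_def', h1]
  norm_num [List.range_succ]

lemma seg_append (x : ℤ → BSym) {a b c : ℤ} (h1 : a ≤ b + 1) (h2 : b ≤ c) :
    seg x a c = seg x a b ++ seg x (b + 1) c := by
  have hm : (c + 1 - a).toNat = (b + 1 - a).toNat + (c + 1 - (b + 1)).toNat := by omega
  rw [seg_def', seg_def', seg_def', hm, List.range_add, List.map_append, List.map_map]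
  congr 1
  apply List.map_congr_left
  intro k hk
  simp only [Function.comp_apply]
  congr 1
  have : ((b + 1 - a).toNat : ℤ) = b + 1 - a := by omega
  push_cast
  omega

/-- Containing an order is preserved by extending the word to the right. -/
lemma orders_mono (X : ℤ → BSym) {a b b' : ℤ} (hbb : b ≤ b')
    (h : (reduceWord (seg X a b)).1 ≠ []) : (reduceWord (seg X a b')).1 ≠ [] := by
  by_cases hab : a ≤ b + 1
  · have heq : reduceWord (seg X a b') =
        List.foldl burgerStep (reduceWord (seg X a b)) (seg X (b+1) b') := by
      rw [reduceWord, seg_append X hab hbb, List.foldl_append]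
      rfl
    rw [heq]
    intro hc
    exact h (foldl_orders_empty hc)
  · rw [seg_empty X (by omega)] at h
    exact absurd rfl h

/-- The main inductive lemma: every `k ∈ {1,…,I m}` sees an order in `X(k, I m)`. -/
lemma main_lemma (X : ℤ → BSym) (I : ℕ → ℕ) (hI0 : I 0 = 0)
    (hmono : ∀ m : ℕ, I m < I (m + 1))
    (horder : ∀ m : ℕ, (reduceWord (seg X ((I m : ℤ) + 1) (I (m + 1) : ℤ))).1 ≠ [])
    (hmin : ∀ m : ℕ, ∀ i : ℕ, I m < i → i < I (m + 1) →
      (reduceWord (seg X ((I m : ℤ) + 1) (i : ℤ))).1 = []) :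
    ∀ m : ℕ, ∀ k : ℕ, 1 ≤ k → k ≤ I m →
      (reduceWord (seg X (k : ℤ) (I m : ℤ))).1 ≠ [] := by
  intro m
  induction m with
  | zero => intro k hk1 hk2; rw [hI0] at hk2; omega
  | succ m ih =>
    intro k hk1 hk2
    by_cases hkm : k ≤ I m
    · exact orders_mono X (by exact_mod_cast (hmono m).le) (ih k hk1 hkm)
    · push_neg at hkm
      set a : ℤ := (I m : ℤ) + 1 with ha
      set N : ℕ := I (m + 1) with hN
      have hmN : I m < N := hmono m
      -- the word up to N-1 reduces to pure burgers
      have hBig : (reduceWord (seg X a ((N : ℤ) - 1))).1 = [] := by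
        by_cases hN1 : I m + 1 < N
        · have h := hmin m (N - 1) (by omega) (by omega)
          have hc : ((N - 1 : ℕ) : ℤ) = (N : ℤ) - 1 := by
            have : 1 ≤ N := by omega
            push_cast [this]
            ring
          rwa [hc] at h
        · rw [seg_empty X (by push_cast; omega)]
          rfl
      -- split at k-1
      have hsplit : seg X a ((N : ℤ) - 1) =
          seg X a ((k : ℤ) - 1) ++ seg X (k : ℤ) ((N : ℤ) - 1) := by
        have h := seg_append X (a := a) (b := (k : ℤ) - 1) (c := (N : ℤ) - 1)
          (by push_cast; omega) (by push_cast; omega)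
        have e : (k : ℤ) - 1 + 1 = (k : ℤ) := by ring
        rwa [e] at h
      rcases hpre : reduceWord (seg X a ((k : ℤ) - 1)) with ⟨Opre, Bpre⟩
      have hOpre : Opre = [] := by
        have hfold : reduceWord (seg X a ((N : ℤ) - 1)) =
            List.foldl burgerStep (Opre, Bpre) (seg X (k : ℤ) ((N : ℤ) - 1)) := by
          rw [reduceWord, hsplit, List.foldl_append, ← hpre]
          rfl
        rw [hfold] at hBig
        exact foldl_orders_empty hBig
      subst hOpre
      -- is the small word pure burgers?
      by_cases hsml : (reduceWord (seg X (k : ℤ) ((N : ℤ) - 1))).1 = []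
      swap
      · have := orders_mono X (a := (k : ℤ)) (b := (N : ℤ) - 1) (b' := (N : ℤ))
          (by omega) hsml
        exact this
      · rcases hsml' : reduceWord (seg X (k : ℤ) ((N : ℤ) - 1)) with ⟨O2, B2⟩
        rw [hsml'] at hsml
        simp only at hsml
        subst hsml
        -- big reduction
        have hBigEq : reduceWord (seg X a ((N : ℤ) - 1)) =
            List.foldl burgerStep ([], Bpre) (seg X (k : ℤ) ((N : ℤ) - 1)) := by
          rw [reduceWord, hsplit, List.foldl_append, ← hpre]
          rfl
        rcases hbig' : reduceWord (seg X a ((N : ℤ) - 1)) with ⟨O1, B1⟩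
        have hO1 : O1 = [] := by rw [hbig'] at hBig; exact hBig
        subst hO1
        -- B2 is a sublist of B1
        have hsub : B2.Sublist B1 := by
          have h1 : (List.foldl burgerStep ([], Bpre) (seg X (k : ℤ) ((N : ℤ) - 1))).1 = [] := by
            rw [← hBigEq, hbig']
          have h2 : (List.foldl burgerStep ([], ([] : List BSym)) (seg X (k : ℤ) ((N : ℤ) - 1))).1 = [] := by
            rw [show (([], []) : List BSym × List BSym) = (([], []) : List BSym × List BSym) from rfl]
            have : List.foldl burgerStep ([], ([] : List BSym)) (seg X (k : ℤ) ((N : ℤ) - 1)) =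
                reduceWord (seg X (k : ℤ) ((N : ℤ) - 1)) := rfl
            rw [this, hsml']
          have h := inv_sublist (seg X (k : ℤ) ((N : ℤ) - 1)) Bpre [] (List.nil_sublist _) h1 h2
          have e2 : List.foldl burgerStep ([], ([] : List BSym)) (seg X (k : ℤ) ((N : ℤ) - 1)) =
              reduceWord (seg X (k : ℤ) ((N : ℤ) - 1)) := rfl
          rw [e2, hsml', ← hBigEq, hbig'] at h
          exact h
        -- the last symbol
        have hlast : seg X a (N : ℤ) = seg X a ((N : ℤ) - 1) ++ [X (N : ℤ)] := by
          have h := seg_append X (a := a) (b := (N : ℤ) - 1) (c := (N : ℤ))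
            (by push_cast; omega) (by omega)
          have e : (N : ℤ) - 1 + 1 = (N : ℤ) := by ring
          rw [e, seg_single] at h
          exact h
        have hord := horder m
        rw [show ((I (m+1) : ℤ)) = (N : ℤ) from by rw [hN], show ((I m : ℤ) + 1) = a from rfl,
          reduceWord, hlast, List.foldl_append] at hord
        have ebig : List.foldl burgerStep ([], []) (seg X a ((N : ℤ) - 1)) =
            reduceWord (seg X a ((N : ℤ) - 1)) := rfl
        rw [ebig, hbig'] at hord
        simp only [List.foldl_cons, List.foldl_nil] at hord
        -- goal reduction
        have hgoal : reduceWord (seg X (k : ℤ) (N : ℤ)) = burgerStep ([], B2) (X (N : ℤ)) := by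
          have hksplit : seg X (k : ℤ) (N : ℤ) =
              seg X (k : ℤ) ((N : ℤ) - 1) ++ [X (N : ℤ)] := by
            have h := seg_append X (a := (k : ℤ)) (b := (N : ℤ) - 1) (c := (N : ℤ))
              (by push_cast; omega) (by omega)
            have e : (N : ℤ) - 1 + 1 = (N : ℤ) := by ring
            rw [e, seg_single] at h
            exact h
          rw [reduceWord, hksplit, List.foldl_append]
          have e2 : List.foldl burgerStep ([], []) (seg X (k : ℤ) ((N : ℤ) - 1)) =
              reduceWord (seg X (k : ℤ) ((N : ℤ) - 1)) := rfl
          rw [e2, hsml']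
          rfl
        rw [show ((I (m+1) : ℤ)) = (N : ℤ) from by rw [hN], hgoal]
        -- case on the last symbol
        cases hX : X (N : ℤ) <;> rw [hX] at hord <;> simp only [burgerStep] at hord ⊢
        · exact (hord rfl).elim
        · exact (hord rfl).elim
        · rcases hr1 : removeRightmost (· == BSym.hb) B1 with _ | B1' <;>
            simp only [hr1] at hord
          · have hno2 : removeRightmost (· == BSym.hb) B2 = none :=
              (rr_none_iff _ B2).mpr (fun b hb => (rr_none_iff _ B1).mp hr1 b (hsub.mem hb))
            rw [hno2]
            simp
          · exact (hord rfl).elim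
        · rcases hr1 : removeRightmost (· == BSym.cb) B1 with _ | B1' <;>
            simp only [hr1] at hord
          · have hno2 : removeRightmost (· == BSym.cb) B2 = none :=
              (rr_none_iff _ B2).mpr (fun b hb => (rr_none_iff _ B1).mp hr1 b (hsub.mem hb))
            rw [hno2]
            simp
          · exact (hord rfl).elim
        · rcases hr1 : removeRightmost (fun _ => true) B1 with _ | B1' <;>
            simp only [hr1] at hord
          · have hno2 : removeRightmost (fun _ => true) B2 = none :=
              (rr_none_iff _ B2).mpr (fun b hb => (rr_none_iff _ B1).mp hr1 b (hsub.mem hb))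
            rw [hno2]
            simp
          · exact (hord rfl).elim

theorem ancestorFree_eq_orderRenewal
    (X : ℤ → BSym) (I : ℕ → ℕ) (hI0 : I 0 = 0)
    (hmono : ∀ m : ℕ, I m < I (m + 1))
    (horder : ∀ m : ℕ, (reduceWord (seg X ((I m : ℤ) + 1) (I (m + 1) : ℤ))).1 ≠ [])
    (hmin : ∀ m : ℕ, ∀ i : ℕ, I m < i → i < I (m + 1) →
      (reduceWord (seg X ((I m : ℤ) + 1) (i : ℤ))).1 = []) :
    ∀ i : ℕ, AncestorFree X i ↔ ∃ m : ℕ, 1 ≤ m ∧ I m = i := by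
  have hIe : ∀ n, n ≤ I n := by
    intro n
    induction n with
    | zero => omega
    | succ n ih => have := hmono n; omega
  intro i
  constructor
  · rintro ⟨hi1, hall⟩
    set m := Nat.findGreatest (fun m => I m < i) i with hmdef
    have h0 : I 0 < i := by rw [hI0]; omega
    have hm : I m < i := Nat.findGreatest_spec (P := fun m => I m < i) (Nat.zero_le i) h0
    have hm1 : i ≤ I (m + 1) := by
      by_contra hc
      push_neg at hc
      have hle : m + 1 ≤ i := le_trans (hIe (m + 1)) hc.le
      exact Nat.findGreatest_is_greatest (Nat.lt_succ_self m) hle hc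
    rcases eq_or_lt_of_le hm1 with heq | hlt
    · exact ⟨m + 1, by omega, heq.symm⟩
    · exfalso
      have hzero := hmin m i hm hlt
      have := hall (I m + 1) (by omega) (by omega)
      apply this
      rw [show ((I m + 1 : ℕ) : ℤ) = ((I m : ℤ) + 1) from by push_cast; ring]
      exact hzero
  · rintro ⟨m, hm1, rfl⟩
    refine ⟨by have := hIe m; omega, fun k hk1 hk2 => ?_⟩
    exact main_lemma X I hI0 hmono horder hmin m k hk1 hk2
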